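/- Let F be a nonempty closed set in ℝⁿ and Ω its complement. Then there exists a countable collection of closed cubes {Q_k} with sides parallel to the axes such that (i) Ω = ⋃ Q_k; (ii) the interiors of the Q_k are pairwise disjoint; (iii) for each k, diam(Q_k) ≤ dist(Q_k, F) ≤ 4·diam(Q_k). -/

import Mathlib

open Set Metric MeasureTheory

/-- Closed axis-parallel cube in `ℝⁿ` with center `c` and half side length `r`. -/
def cube (n : ℕ) (c : EuclideanSpace ℝ (Fin n)) (r : ℝ) : Set (EuclideanSpace ℝ (Fin n)) :=
  {x | ∀ i, |x i - c i| ≤ r}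

/-- Distance between two sets. -/
noncomputable def sDist {α : Type*} [PseudoMetricSpace α] (s t : Set α) : ℝ :=
  sInf {d : ℝ | ∃ x ∈ s, ∃ y ∈ t, d = dist x y}

namespace WhitneyAux

open Real

variable {n : ℕ}

/-! ### Generic facts about cubes -/

lemma cube_nonempty (c : EuclideanSpace ℝ (Fin n)) {r : ℝ} (hr : 0 ≤ r) :
    (cube n c r).Nonempty :=
  ⟨c, fun i => by simp [hr]⟩

lemma center_mem_cube (c : EuclideanSpace ℝ (Fin n)) {r : ℝ} (hr : 0 ≤ r) :
    c ∈ cube n c r := fun i => by simp [hr]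

lemma dist_le_of_mem_cube {c : EuclideanSpace ℝ (Fin n)} {r : ℝ} (hr : 0 ≤ r)
    {x y : EuclideanSpace ℝ (Fin n)} (hx : x ∈ cube n c r) (hy : y ∈ cube n c r) :
    dist x y ≤ 2 * r * Real.sqrt n := by
  rw [EuclideanSpace.dist_eq]
  have h1 : ∀ i : Fin n, dist (x i) (y i) ^ 2 ≤ (2 * r) ^ 2 := by
    intro i
    have hxi := hx i
    have hyi := hy i
    rw [Real.dist_eq]
    have h3 : |x i - y i| ≤ 2 * r := by
      have h5 := abs_sub_le (x i) (c i) (y i)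
      have h4 : |c i - y i| = |y i - c i| := abs_sub_comm _ _
      linarith
    nlinarith [abs_nonneg (x i - y i), sq_abs (x i - y i)]
  calc Real.sqrt (∑ i, dist (x i) (y i) ^ 2)
      ≤ Real.sqrt (∑ _i : Fin n, (2 * r) ^ 2) :=
        Real.sqrt_le_sqrt (Finset.sum_le_sum fun i _ => h1 i)
    _ = 2 * r * Real.sqrt n := by
        rw [Finset.sum_const, Finset.card_univ, Fintype.card_fin, nsmul_eq_mul]
        rw [Real.sqrt_mul (by positivity), Real.sqrt_sq (by positivity)]
        ring

lemma isBounded_cube (c : EuclideanSpace ℝ (Fin n)) {r : ℝ} (hr : 0 ≤ r) :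
    Bornology.IsBounded (cube n c r) := by
  apply (Metric.isBounded_closedBall (x := c) (r := 2 * r * Real.sqrt n)).subset
  intro x hx
  exact Metric.mem_closedBall.2 (dist_le_of_mem_cube hr hx (center_mem_cube c hr))

lemma diam_cube (c : EuclideanSpace ℝ (Fin n)) {r : ℝ} (hr : 0 ≤ r) :
    Metric.diam (cube n c r) = 2 * r * Real.sqrt n := by
  apply le_antisymm
  · exact Metric.diam_le_of_forall_dist_le (by positivity)
      (fun x hx y hy => dist_le_of_mem_cube hr hx hy)
  · set a : EuclideanSpace ℝ (Fin n) := WithLp.toLp 2 (fun i => c i - r) with ha_def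
    set b : EuclideanSpace ℝ (Fin n) := WithLp.toLp 2 (fun i => c i + r) with hb_def
    have ha : a ∈ cube n c r := by
      intro i
      show |(c i - r) - c i| ≤ r
      have h : (c i - r) - c i = -r := by ring
      rw [h, abs_neg, abs_of_nonneg hr]
    have hb : b ∈ cube n c r := by
      intro i
      show |(c i + r) - c i| ≤ r
      have h : (c i + r) - c i = r := by ring
      rw [h, abs_of_nonneg hr]
    have hd : dist a b = 2 * r * Real.sqrt n := by
      rw [EuclideanSpace.dist_eq]
      have h1 : ∀ i : Fin n, dist (a i) (b i) ^ 2 = (2 * r) ^ 2 := by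
        intro i
        show dist (c i - r) (c i + r) ^ 2 = (2 * r) ^ 2
        rw [Real.dist_eq]
        have h : (c i - r) - (c i + r) = -(2 * r) := by ring
        rw [h, abs_neg, abs_of_nonneg (by positivity)]
      rw [Finset.sum_congr rfl fun i _ => h1 i]
      rw [Finset.sum_const, Finset.card_univ, Fintype.card_fin, nsmul_eq_mul]
      rw [Real.sqrt_mul (by positivity), Real.sqrt_sq (by positivity)]
      ring
    calc 2 * r * Real.sqrt n = dist a b := hd.symm
      _ ≤ Metric.diam (cube n c r) := Metric.dist_le_diam_of_mem (isBounded_cube c hr) ha hb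

/-- Interior points of a cube satisfy the strict inequalities. -/
lemma abs_lt_of_mem_interior {c : EuclideanSpace ℝ (Fin n)} {r : ℝ}
    {x : EuclideanSpace ℝ (Fin n)} (hx : x ∈ interior (cube n c r)) (i : Fin n) :
    |x i - c i| < r := by
  have hmem : x ∈ cube n c r := interior_subset hx
  rw [mem_interior_iff_mem_nhds, Metric.mem_nhds_iff] at hx
  obtain ⟨ε, hε, hball⟩ := hx
  set σ : ℝ := if c i ≤ x i then 1 else -1 with hσ
  have hσabs : |σ| = 1 := by
    rw [hσ]; split <;> simp
  set x' : EuclideanSpace ℝ (Fin n) := WithLp.toLp 2 (fun j => if j = i then x i + ε / 2 * σ else x j) with hx'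
  have hdist : dist x' x = ε / 2 := by
    rw [EuclideanSpace.dist_eq]
    have h1 : ∀ j : Fin n, dist (x' j) (x j) ^ 2 = if j = i then (ε / 2) ^ 2 else 0 := by
      intro j
      by_cases hj : j = i
      · subst hj
        have h : x' j = x j + ε / 2 * σ := by simp [hx']
        rw [h, Real.dist_eq]
        have h2 : x j + ε / 2 * σ - x j = ε / 2 * σ := by ring
        rw [h2, abs_mul, hσabs, if_pos rfl, abs_of_nonneg (by positivity)]
        ring
      · have h : x' j = x j := by simp [hx', hj]
        rw [h, if_neg hj]
        simp
    rw [Finset.sum_congr rfl fun j _ => h1 j, Finset.sum_ite_eq' Finset.univ i]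
    rw [if_pos (Finset.mem_univ i), Real.sqrt_sq (by positivity)]
  have hx'mem : x' ∈ cube n c r := hball (by
    rw [Metric.mem_ball, hdist]; linarith)
  have hx'i : x' i = x i + ε / 2 * σ := by simp [hx']
  have hle := hx'mem i
  rw [hx'i] at hle
  have hle2 := hmem i
  by_cases hci : c i ≤ x i
  · have hσ1 : σ = 1 := by rw [hσ, if_pos hci]
    rw [hσ1] at hle
    have h6 : |x i + ε / 2 * 1 - c i| = x i - c i + ε / 2 := by
      rw [abs_of_nonneg (by linarith)]; ring
    rw [h6] at hle
    rw [abs_of_nonneg (by linarith)]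
    linarith
  · push_neg at hci
    have hσ1 : σ = -1 := by rw [hσ, if_neg (not_le.2 hci)]
    rw [hσ1] at hle
    have h6 : |x i + ε / 2 * (-1) - c i| = c i - x i + ε / 2 := by
      rw [abs_of_nonpos (by linarith)]; ring
    rw [h6] at hle
    rw [abs_of_nonpos (by linarith)]
    linarith

/-! ### Generic facts about `sDist` -/

lemma sDist_le {α : Type*} [PseudoMetricSpace α] {s t : Set α} {x y : α}
    (hx : x ∈ s) (hy : y ∈ t) : sDist s t ≤ dist x y :=
  csInf_le ⟨0, fun d ⟨a, _, b, _, hd⟩ => hd ▸ dist_nonneg⟩ ⟨x, hx, y, hy, rfl⟩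

lemma le_sDist {α : Type*} [PseudoMetricSpace α] {s t : Set α} (hs : s.Nonempty)
    (ht : t.Nonempty) {b : ℝ} (h : ∀ x ∈ s, ∀ y ∈ t, b ≤ dist x y) : b ≤ sDist s t := by
  have hne : {d : ℝ | ∃ x ∈ s, ∃ y ∈ t, d = dist x y}.Nonempty :=
    ⟨dist hs.some ht.some, hs.some, hs.some_mem, ht.some, ht.some_mem, rfl⟩
  apply le_csInf hne
  rintro d ⟨a, ha, b', hb', rfl⟩
  exact h a ha b' hb'

lemma sDist_anti {α : Type*} [PseudoMetricSpace α] {s s' t : Set α} (h : s ⊆ s')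
    (hs : s.Nonempty) (ht : t.Nonempty) : sDist s' t ≤ sDist s t := by
  have hbdd : BddBelow {d : ℝ | ∃ x ∈ s', ∃ y ∈ t, d = dist x y} :=
    ⟨0, fun d ⟨a, _, b, _, hd⟩ => hd ▸ dist_nonneg⟩
  have hne : {d : ℝ | ∃ x ∈ s, ∃ y ∈ t, d = dist x y}.Nonempty :=
    ⟨dist hs.some ht.some, hs.some, hs.some_mem, ht.some, ht.some_mem, rfl⟩
  apply csInf_le_csInf hbdd hne
  rintro d ⟨a, ha, b, hb, rfl⟩
  exact ⟨a, h ha, b, hb, rfl⟩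

/-! ### Dyadic cubes -/

/-- Center of the dyadic cube of generation `k` indexed by `m`. -/
noncomputable def ctr (n : ℕ) (k : ℤ) (m : Fin n → ℤ) : EuclideanSpace ℝ (Fin n) :=
  WithLp.toLp 2 (fun i => (m i : ℝ) * 2 ^ (-k) + 2 ^ (-k) / 2)

/-- The dyadic cube of generation `k` indexed by `m`. -/
noncomputable def D (n : ℕ) (k : ℤ) (m : Fin n → ℤ) : Set (EuclideanSpace ℝ (Fin n)) :=
  cube n (ctr n k m) ((2 : ℝ) ^ (-k) / 2)

lemma ctr_apply (k : ℤ) (m : Fin n → ℤ) (i : Fin n) :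
    ctr n k m i = (m i : ℝ) * 2 ^ (-k) + 2 ^ (-k) / 2 := rfl

lemma mem_D {k : ℤ} {m : Fin n → ℤ} {x : EuclideanSpace ℝ (Fin n)} :
    x ∈ D n k m ↔ ∀ i, (m i : ℝ) * 2 ^ (-k) ≤ x i ∧ x i ≤ ((m i : ℝ) + 1) * 2 ^ (-k) := by
  have key : ∀ i : Fin n, ((m i : ℝ) + 1) * 2 ^ (-k) = (m i : ℝ) * 2 ^ (-k) + 2 ^ (-k) := by
    intro i; ring
  constructor
  · intro h i
    have h1 := h i
    rw [ctr_apply, abs_le] at h1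
    constructor
    · linarith [h1.1]
    · rw [key i]; linarith [h1.2]
  · intro h i
    have h1 := h i
    rw [key i] at h1
    rw [ctr_apply, abs_le]
    constructor <;> linarith [h1.1, h1.2]

lemma D_nonempty (k : ℤ) (m : Fin n → ℤ) : (D n k m).Nonempty :=
  cube_nonempty _ (by positivity)

lemma diam_D (k : ℤ) (m : Fin n → ℤ) :
    Metric.diam (D n k m) = Real.sqrt n * 2 ^ (-k) := by
  rw [D, diam_cube _ (by positivity : (0:ℝ) ≤ 2 ^ (-k) / 2)]
  ring

/-- Strict coordinate bounds for interior points of dyadic cubes. -/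
lemma strict_mem_of_interior {k : ℤ} {m : Fin n → ℤ} {x : EuclideanSpace ℝ (Fin n)}
    (hx : x ∈ interior (D n k m)) (i : Fin n) :
    (m i : ℝ) * 2 ^ (-k) < x i ∧ x i < ((m i : ℝ) + 1) * 2 ^ (-k) := by
  have h := abs_lt_of_mem_interior hx i
  rw [ctr_apply, abs_lt] at h
  have key : ((m i : ℝ) + 1) * 2 ^ (-k) = (m i : ℝ) * 2 ^ (-k) + 2 ^ (-k) := by ring
  constructor
  · linarith [h.1]
  · rw [key]; linarith [h.2]

/-- Endpoint inequalities from containment of dyadic cubes. -/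
lemma endpoints_of_subset {k k' : ℤ} {m m' : Fin n → ℤ}
    (h : D n k m ⊆ D n k' m') (i : Fin n) :
    (m' i : ℝ) * 2 ^ (-k') ≤ (m i : ℝ) * 2 ^ (-k) ∧
      ((m i : ℝ) + 1) * 2 ^ (-k) ≤ ((m' i : ℝ) + 1) * 2 ^ (-k') := by
  have epos : (0:ℝ) < 2 ^ (-k) := by positivity
  set lo : EuclideanSpace ℝ (Fin n) := WithLp.toLp 2 (fun j => (m j : ℝ) * 2 ^ (-k)) with hlo_def
  set hi : EuclideanSpace ℝ (Fin n) := WithLp.toLp 2 (fun j => ((m j : ℝ) + 1) * 2 ^ (-k)) with hhi_def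
  have hlo : lo ∈ D n k m := by
    rw [mem_D]
    intro j
    refine ⟨le_refl _, ?_⟩
    show (m j : ℝ) * 2 ^ (-k) ≤ ((m j : ℝ) + 1) * 2 ^ (-k)
    nlinarith
  have hhi : hi ∈ D n k m := by
    rw [mem_D]
    intro j
    refine ⟨?_, le_refl _⟩
    show (m j : ℝ) * 2 ^ (-k) ≤ ((m j : ℝ) + 1) * 2 ^ (-k)
    nlinarith
  have h1 := (mem_D.1 (h hlo)) i
  have h2 := (mem_D.1 (h hhi)) i
  exact ⟨h1.1, h2.2⟩

/-- A dyadic cube contained in another has larger (or equal) generation index. -/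
lemma gen_le_of_subset (hn : 0 < n) {k k' : ℤ} {m m' : Fin n → ℤ}
    (h : D n k m ⊆ D n k' m') : k' ≤ k := by
  have i : Fin n := ⟨0, hn⟩
  obtain ⟨h1, h2⟩ := endpoints_of_subset h i
  have h3 : (2:ℝ) ^ (-k) ≤ 2 ^ (-k') := by nlinarith
  have h4 : -k ≤ -k' := (zpow_le_zpow_iff_right₀ (by norm_num : (1:ℝ) < 2)).1 h3
  omega

/-- Same-generation containment forces equality. -/
lemma eq_of_subset_same_gen {k : ℤ} {m m' : Fin n → ℤ}
    (h : D n k m ⊆ D n k m') : m = m' := by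
  funext i
  obtain ⟨h1, h2⟩ := endpoints_of_subset h i
  have epos : (0:ℝ) < 2 ^ (-k) := by positivity
  have h3 : (m' i : ℝ) ≤ m i := le_of_mul_le_mul_right (by linarith) epos
  have h4 : (m i : ℝ) + 1 ≤ (m' i : ℝ) + 1 := le_of_mul_le_mul_right (by linarith) epos
  have h5 : (m i : ℝ) = m' i := by linarith
  exact_mod_cast h5

/-- The key nesting lemma: if two dyadic cubes have a common interior point and the first has
finer generation, then the first is contained in the second. -/
lemma nest {k k' : ℤ} {m m' : Fin n → ℤ} (hk : k' ≤ k) {x : EuclideanSpace ℝ (Fin n)}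
    (hx : x ∈ interior (D n k m)) (hx' : x ∈ interior (D n k' m')) :
    D n k m ⊆ D n k' m' := by
  have epos : (0:ℝ) < 2 ^ (-k) := by positivity
  have key : ∀ i : Fin n, (m' i : ℝ) * 2 ^ (-k') ≤ (m i : ℝ) * 2 ^ (-k) ∧
      ((m i : ℝ) + 1) * 2 ^ (-k) ≤ ((m' i : ℝ) + 1) * 2 ^ (-k') := by
    intro i
    obtain ⟨ha1, ha2⟩ := strict_mem_of_interior hx i
    obtain ⟨hb1, hb2⟩ := strict_mem_of_interior hx' i
    set j : ℕ := (k - k').toNat with hj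
    have hjk : (j : ℤ) = k - k' := Int.toNat_of_nonneg (by omega)
    have h2e : (2:ℝ) ^ (-k') = (2:ℝ) ^ (j:ℕ) * 2 ^ (-k) := by
      rw [← zpow_natCast (2:ℝ) j, ← zpow_add₀ (two_ne_zero : (2:ℝ) ≠ 0)]
      congr 1
      omega
    set N : ℤ := m' i * 2 ^ j with hN
    have hNcast : (N : ℝ) = (m' i : ℝ) * 2 ^ j := by push_cast [hN]; ring
    have hNle : N ≤ m i := by
      have hr1 : (N : ℝ) * 2 ^ (-k) < ((m i : ℝ) + 1) * 2 ^ (-k) := by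
        rw [hNcast]
        calc (m' i : ℝ) * 2 ^ (j:ℕ) * 2 ^ (-k) = (m' i : ℝ) * 2 ^ (-k') := by rw [h2e]; ring
          _ < x i := hb1
          _ < ((m i : ℝ) + 1) * 2 ^ (-k) := ha2
      have hr2 : (N : ℝ) < (m i : ℝ) + 1 := lt_of_mul_lt_mul_right hr1 (le_of_lt epos)
      have hr3 : (N : ℝ) < ((m i + 1 : ℤ) : ℝ) := by push_cast; linarith
      have := Int.cast_lt.1 hr3
      omega
    have hmle : m i + 1 ≤ N + 2 ^ j := by
      have hr1 : (m i : ℝ) * 2 ^ (-k) < ((N : ℝ) + 2 ^ (j:ℕ)) * 2 ^ (-k) := by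
        calc (m i : ℝ) * 2 ^ (-k) < x i := ha1
          _ < ((m' i : ℝ) + 1) * 2 ^ (-k') := hb2
          _ = ((N : ℝ) + 2 ^ (j:ℕ)) * 2 ^ (-k) := by rw [h2e, hNcast]; ring
      have hr2 : (m i : ℝ) < (N : ℝ) + 2 ^ (j:ℕ) := lt_of_mul_lt_mul_right hr1 (le_of_lt epos)
      have hr3 : ((m i : ℤ) : ℝ) < ((N + 2 ^ j : ℤ) : ℝ) := by push_cast; linarith
      have := Int.cast_lt.1 hr3
      omega
    constructor
    · calc (m' i : ℝ) * 2 ^ (-k') = (N : ℝ) * 2 ^ (-k) := by rw [h2e, hNcast]; ring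
        _ ≤ (m i : ℝ) * 2 ^ (-k) := by
            have hNer : (N : ℝ) ≤ (m i : ℝ) := Int.cast_le.2 hNle
            nlinarith
    · calc ((m i : ℝ) + 1) * 2 ^ (-k) ≤ ((N : ℝ) + 2 ^ (j:ℕ)) * 2 ^ (-k) := by
            have hNer : (m i : ℝ) + 1 ≤ (N : ℝ) + 2 ^ (j:ℕ) := by
              have h9 : ((m i + 1 : ℤ) : ℝ) ≤ ((N + 2 ^ j : ℤ) : ℝ) := Int.cast_le.2 hmle
              push_cast at h9
              linarith
            nlinarith
        _ = ((m' i : ℝ) + 1) * 2 ^ (-k') := by rw [h2e, hNcast]; ring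
  intro z hz
  rw [mem_D] at hz ⊢
  intro i
  obtain ⟨k1, k2⟩ := key i
  obtain ⟨z1, z2⟩ := hz i
  exact ⟨le_trans k1 z1, le_trans z2 k2⟩

/-! ### The Whitney selection -/

variable (n) in
/-- The selection predicate: a dyadic cube is selected if it meets the layer of points whose
distance to `F` is comparable to the cube size. -/
def sel (F : Set (EuclideanSpace ℝ (Fin n))) (k : ℤ) (m : Fin n → ℤ) : Prop :=
  ∃ x ∈ D n k m, 2 * Real.sqrt n * 2 ^ (-k) ≤ infDist x F ∧
    infDist x F < 4 * Real.sqrt n * 2 ^ (-k)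

variable {F : Set (EuclideanSpace ℝ (Fin n))}

/-- Selected cubes satisfy the Whitney distance estimates. -/
lemma estimates (hF : F.Nonempty) {k : ℤ} {m : Fin n → ℤ} (h : sel n F k m) :
    Metric.diam (D n k m) ≤ sDist (D n k m) F ∧
      sDist (D n k m) F < 4 * Metric.diam (D n k m) := by
  obtain ⟨x₀, hx₀, hlow, hhigh⟩ := h
  have hdiam := diam_D (n := n) k m
  constructor
  · rw [hdiam]
    apply le_sDist (D_nonempty k m) hF
    intro x hx y hy
    have h1 : infDist x₀ F ≤ dist x₀ y := infDist_le_dist_of_mem hy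
    have h2 : dist x₀ x ≤ 2 * ((2:ℝ) ^ (-k) / 2) * Real.sqrt n :=
      dist_le_of_mem_cube (by positivity) hx₀ hx
    have h3 : dist x₀ y ≤ dist x₀ x + dist x y := dist_triangle x₀ x y
    have h4 : 2 * ((2:ℝ) ^ (-k) / 2) * Real.sqrt n = Real.sqrt n * 2 ^ (-k) := by ring
    rw [h4] at h2
    linarith
  · have h5 : sDist (D n k m) F ≤ infDist x₀ F := by
      by_contra hc
      push_neg at hc
      obtain ⟨y, hy, hdy⟩ := (infDist_lt_iff hF).1 hc
      exact absurd (sDist_le hx₀ hy) (not_le.2 hdy)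
    rw [hdiam]
    calc sDist (D n k m) F ≤ infDist x₀ F := h5
      _ < 4 * Real.sqrt n * 2 ^ (-k) := hhigh
      _ = 4 * (Real.sqrt n * 2 ^ (-k)) := by ring

/-- Generation bound: a selected cube containing a selected cube is at most two generations
coarser. -/
lemma gen_bound (hn : 0 < n) (hF : F.Nonempty) {k k' : ℤ} {m m' : Fin n → ℤ}
    (h : sel n F k m) (h' : sel n F k' m') (hsub : D n k m ⊆ D n k' m') :
    k - 2 ≤ k' := by
  have e1 := estimates hF h
  have e2 := estimates hF h'
  have hmono : sDist (D n k' m') F ≤ sDist (D n k m) F :=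
    sDist_anti hsub (D_nonempty k m) hF
  have hlt : Metric.diam (D n k' m') < 4 * Metric.diam (D n k m) := by
    calc Metric.diam (D n k' m') ≤ sDist (D n k' m') F := e2.1
      _ ≤ sDist (D n k m) F := hmono
      _ < 4 * Metric.diam (D n k m) := e1.2
  rw [diam_D, diam_D] at hlt
  have hs : (0:ℝ) < Real.sqrt n := Real.sqrt_pos.2 (by exact_mod_cast hn)
  have h2 : (2:ℝ) ^ (-k') < 4 * 2 ^ (-k) := by nlinarith
  have h3 : (4:ℝ) * 2 ^ (-k) = 2 ^ (-k + 2) := by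
    rw [zpow_add₀ (two_ne_zero : (2:ℝ) ≠ 0)]
    norm_num
    ring
  rw [h3] at h2
  have h4 : -k' < -k + 2 := (zpow_lt_zpow_iff_right₀ (by norm_num : (1:ℝ) < 2)).1 h2
  omega

/-- Every selected cube is contained in a maximal selected cube. -/
lemma exists_max (hn : 0 < n) (hF : F.Nonempty) {k : ℤ} {m : Fin n → ℤ}
    (h : sel n F k m) :
    ∃ p : ℤ × (Fin n → ℤ), (sel n F p.1 p.2 ∧
        ∀ q : ℤ × (Fin n → ℤ), sel n F q.1 q.2 → D n p.1 p.2 ⊆ D n q.1 q.2 → p = q) ∧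
      D n k m ⊆ D n p.1 p.2 := by
  have Hbdd : ∃ b : ℤ, ∀ z : ℤ, (∃ m', sel n F z m' ∧ D n k m ⊆ D n z m') → b ≤ z := by
    refine ⟨k - 2, ?_⟩
    rintro z ⟨m', hsel', hsub'⟩
    exact gen_bound hn hF h hsel' hsub'
  have Hinh : ∃ z : ℤ, ∃ m', sel n F z m' ∧ D n k m ⊆ D n z m' := ⟨k, m, h, subset_refl _⟩
  obtain ⟨lb, ⟨m₀, hsel₀, hsub₀⟩, hleast⟩ := Int.exists_least_of_bdd Hbdd Hinh
  refine ⟨(lb, m₀), ⟨hsel₀, ?_⟩, hsub₀⟩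
  rintro ⟨k', m'⟩ hsel' hsub'
  have h1 : lb ≤ k' := hleast k' ⟨m', hsel', hsub₀.trans hsub'⟩
  have h2 : k' ≤ lb := gen_le_of_subset hn hsub'
  have hkk : k' = lb := le_antisymm h2 h1
  subst hkk
  have hmm := eq_of_subset_same_gen hsub'
  exact congrArg (Prod.mk k') hmm

/-- Coverage: every point of the complement lies in some selected cube. -/
lemma cover (hn : 0 < n) (hF : F.Nonempty) (hclosed : IsClosed F)
    {x : EuclideanSpace ℝ (Fin n)} (hx : x ∉ F) :
    ∃ k m, sel n F k m ∧ x ∈ D n k m := by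
  have hd : 0 < infDist x F := (hclosed.notMem_iff_infDist_pos hF).1 hx
  have hs : (0:ℝ) < Real.sqrt n := Real.sqrt_pos.2 (by exact_mod_cast hn)
  have hapos : 0 < infDist x F / (2 * Real.sqrt n) := by positivity
  obtain ⟨j, hj1, hj2⟩ := exists_mem_Ico_zpow hapos (by norm_num : (1:ℝ) < 2)
  have hepos : (0:ℝ) < 2 ^ j := by positivity
  refine ⟨-j, fun i => ⌊x i / 2 ^ j⌋, ?_, ?_⟩
  · refine ⟨x, ?_, ?_, ?_⟩
    · rw [mem_D]
      intro i
      simp only [neg_neg]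
      constructor
      · have h1 : (⌊x i / 2 ^ j⌋ : ℝ) ≤ x i / 2 ^ j := Int.floor_le _
        calc (⌊x i / 2 ^ j⌋ : ℝ) * 2 ^ j ≤ (x i / 2 ^ j) * 2 ^ j := by nlinarith
          _ = x i := by field_simp
      · have h1 : x i / 2 ^ j < ⌊x i / 2 ^ j⌋ + 1 := Int.lt_floor_add_one _
        have h2 : x i < ((⌊x i / 2 ^ j⌋ : ℝ) + 1) * 2 ^ j := by
          rw [← div_lt_iff₀ hepos] at *
          exact h1
        linarith
    · simp only [neg_neg]
      have h1 : (2:ℝ) ^ j ≤ infDist x F / (2 * Real.sqrt n) := hj1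
      rw [le_div_iff₀ (by positivity)] at h1
      linarith [h1]
    · simp only [neg_neg]
      have h2 : infDist x F / (2 * Real.sqrt n) < 2 ^ (j + 1) := hj2
      rw [div_lt_iff₀ (by positivity)] at h2
      have h3 : (2:ℝ) ^ (j + 1) = 2 ^ j * 2 := by
        rw [zpow_add₀ (two_ne_zero : (2:ℝ) ≠ 0)]
        norm_num
      rw [h3] at h2
      nlinarith
  · rw [mem_D]
    intro i
    simp only [neg_neg]
    constructor
    · have h1 : (⌊x i / 2 ^ j⌋ : ℝ) ≤ x i / 2 ^ j := Int.floor_le _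
      calc (⌊x i / 2 ^ j⌋ : ℝ) * 2 ^ j ≤ (x i / 2 ^ j) * 2 ^ j := by nlinarith
        _ = x i := by field_simp
    · have h1 : x i / 2 ^ j < ⌊x i / 2 ^ j⌋ + 1 := Int.lt_floor_add_one _
      have h2 : x i < ((⌊x i / 2 ^ j⌋ : ℝ) + 1) * 2 ^ j := by
        rw [← div_lt_iff₀ hepos]
        exact h1
      linarith

end WhitneyAux

open WhitneyAux in
/-- **Whitney decomposition.** For a nonempty closed set `F ⊆ ℝⁿ`, its complement can be
decomposed into countably many closed axis-parallel cubes with pairwise disjoint interiors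
satisfying `diam Q_k ≤ dist(Q_k, F) ≤ 4 diam Q_k`. -/
theorem whitney_decomposition (n : ℕ) (F : Set (EuclideanSpace ℝ (Fin n)))
    (hne : F.Nonempty) (hclosed : IsClosed F) :
    ∃ (ι : Type) (_ : Countable ι) (c : ι → EuclideanSpace ℝ (Fin n)) (r : ι → ℝ),
      (∀ k, 0 < r k) ∧
      Fᶜ = ⋃ k, cube n (c k) (r k) ∧
      (∀ k l, k ≠ l → interior (cube n (c k) (r k)) ∩ interior (cube n (c l) (r l)) = ∅) ∧
      (∀ k, Metric.diam (cube n (c k) (r k)) ≤ sDist (cube n (c k) (r k)) F ∧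
        sDist (cube n (c k) (r k)) F ≤ 4 * Metric.diam (cube n (c k) (r k))) := by
  classical
  by_cases hem : Fᶜ = ∅
  · refine ⟨Empty, inferInstance, fun e => e.elim, fun e => e.elim, fun e => e.elim, ?_,
      fun e => e.elim, fun e => e.elim⟩
    rw [hem]
    exact (iUnion_of_empty _).symm
  · have hΩ : ∃ x, x ∉ F := by
      rw [← ne_eq, ← nonempty_iff_ne_empty] at hem
      obtain ⟨x, hx⟩ := hem
      exact ⟨x, hx⟩
    have hn : 0 < n := by
      by_contra h0
      push_neg at h0
      have hn0 : n = 0 := by omega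
      subst hn0
      have hsub : Subsingleton (EuclideanSpace ℝ (Fin 0)) :=
        ⟨fun a b => PiLp.ext fun i => i.elim0⟩
      obtain ⟨y, hy⟩ := hne
      obtain ⟨x, hx⟩ := hΩ
      exact hx (hsub.elim x y ▸ hy)
    refine ⟨{p : ℤ × (Fin n → ℤ) // sel n F p.1 p.2 ∧
        ∀ q : ℤ × (Fin n → ℤ), sel n F q.1 q.2 → D n p.1 p.2 ⊆ D n q.1 q.2 → p = q},
      inferInstance, fun p => ctr n p.1.1 p.1.2, fun p => (2:ℝ) ^ (-p.1.1) / 2,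
      fun p => by positivity, ?_, ?_, ?_⟩
    · ext z
      simp only [mem_compl_iff, mem_iUnion]
      constructor
      · intro hz
        obtain ⟨k, m, hsel, hzm⟩ := cover hn hne hclosed hz
        obtain ⟨p, hgood, hsub⟩ := exists_max hn hne hsel
        exact ⟨⟨p, hgood⟩, hsub hzm⟩
      · rintro ⟨p, hzp⟩ hzF
        have est := (estimates hne p.2.1).1
        have hs : (0:ℝ) < Real.sqrt n := Real.sqrt_pos.2 (by exact_mod_cast hn)
        have hdpos : 0 < Metric.diam (D n p.1.1 p.1.2) := by
          rw [diam_D]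
          positivity
        have hle : sDist (D n p.1.1 p.1.2) F ≤ 0 := by
          have h7 : sDist (D n p.1.1 p.1.2) F ≤ dist z z := sDist_le (hzp : z ∈ D n p.1.1 p.1.2) hzF
          simpa only [dist_self] using h7
        linarith
    · rintro p q hpq
      rw [eq_empty_iff_forall_notMem]
      rintro x ⟨hxp, hxq⟩
      have key : ∀ (p' q' : {p : ℤ × (Fin n → ℤ) // sel n F p.1 p.2 ∧
          ∀ q : ℤ × (Fin n → ℤ), sel n F q.1 q.2 → D n p.1 p.2 ⊆ D n q.1 q.2 → p = q}),
          q'.1.1 ≤ p'.1.1 → x ∈ interior (D n p'.1.1 p'.1.2) →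
          x ∈ interior (D n q'.1.1 q'.1.2) → p' = q' := by
        intro p' q' hk hxp' hxq'
        have hsub := nest hk hxp' hxq'
        exact Subtype.ext (p'.2.2 q'.1 q'.2.1 hsub)
      rcases le_total q.1.1 p.1.1 with h | h
      · exact hpq (key p q h hxp hxq)
      · exact hpq ((key q p h hxq hxp).symm)
    · intro p
      have est := estimates hne p.2.1
      exact ⟨est.1, le_of_lt est.2⟩
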